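/- A Golay sequence has PMEPR at most 2: if (a,b) is a GCP of length N with unimodular entries, then for every real θ, |sum_{k=0}^{N-1} a_k e^{i k θ}|^2 ≤ 2N. Equivalently, the peak-to-mean envelope power ratio of a is at most 2. -/

import Mathlib

open Finset Complex

/-- Extension of a length-`N` sequence to `ℤ` by zero outside `[0, N)`. -/
noncomputable def extSeq (N : ℕ) (d : ℕ → ℂ) : ℤ → ℂ :=
  fun i => if 0 ≤ i ∧ i < (N : ℤ) then d i.toNat else 0

/-- Aperiodic cross-correlation of length-`N` complex sequences at integer shift `s`. -/
noncomputable def acorr (N : ℕ) (d e : ℕ → ℂ) (s : ℤ) : ℂ :=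
  ∑ k ∈ Finset.range N, extSeq N d k * (starRingEnd ℂ) (extSeq N e (k + s))

/-- Aperiodic autocorrelation. -/
noncomputable def aauto (N : ℕ) (e : ℕ → ℂ) (s : ℤ) : ℂ := acorr N e e s

/-- Golay complementary pair of length `N`. -/
def IsGCP (N : ℕ) (a b : ℕ → ℂ) : Prop :=
  ∀ s : ℤ, s ≠ 0 → aauto N a s + aauto N b s = 0

/-- The fiber of pairs `(j,k)` in `[0,N)²` with `k - j = s`. -/
noncomputable def gfib (N : ℕ) (s : ℤ) : Finset (ℕ × ℕ) :=
  (Finset.range N ×ˢ Finset.range N).filter (fun p => (p.2 : ℤ) - p.1 = s)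

lemma aauto_eq_fiber (N : ℕ) (d : ℕ → ℂ) (s : ℤ) :
    aauto N d s = ∑ p ∈ gfib N s, d p.1 * (starRingEnd ℂ) (d p.2) := by
  unfold gfib
  rw [Finset.sum_filter, Finset.sum_product]
  unfold aauto acorr
  apply Finset.sum_congr rfl
  intro j hj
  simp only [Finset.mem_range] at hj
  have h1 : extSeq N d j = d j := by
    rw [extSeq]
    rw [if_pos ⟨Int.natCast_nonneg j, by exact_mod_cast hj⟩]
    simp
  rw [h1]
  by_cases hc : 0 ≤ (j : ℤ) + s ∧ (j : ℤ) + s < N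
  · set m := ((j : ℤ) + s).toNat with hm
    have hmz : (m : ℤ) = (j : ℤ) + s := Int.toNat_of_nonneg hc.1
    have h2 : extSeq N d ((j : ℤ) + s) = d m := by
      rw [extSeq, if_pos hc]
    rw [h2]
    symm
    rw [Finset.sum_eq_single_of_mem m (Finset.mem_range.2 (by omega))
      (fun k hk hkm => by
        rw [if_neg]
        intro hcon
        apply hkm
        omega)]
    rw [if_pos (by omega)]
  · have h2 : extSeq N d ((j : ℤ) + s) = 0 := by
      rw [extSeq, if_neg hc]
    rw [h2, map_zero, mul_zero]
    symm
    apply Finset.sum_eq_zero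
    intro k hk
    rw [Finset.mem_range] at hk
    rw [if_neg]
    intro hcon
    omega

lemma aauto_zero (N : ℕ) (d : ℕ → ℂ) (hd : ∀ k < N, ‖d k‖ = 1) :
    aauto N d 0 = N := by
  unfold aauto acorr
  have h1 : ∀ k ∈ Finset.range N,
      extSeq N d k * (starRingEnd ℂ) (extSeq N d (k + 0)) = 1 := by
    intro k hk
    rw [Finset.mem_range] at hk
    have he : extSeq N d ((k : ℤ) + 0) = d k := by
      rw [extSeq, if_pos ⟨by omega, by omega⟩]
      simp
    have he' : extSeq N d k = d k := by
      rw [extSeq, if_pos ⟨Int.natCast_nonneg k, by exact_mod_cast hk⟩]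
      simp
    rw [he, he', Complex.mul_conj, Complex.normSq_eq_norm_sq, hd k hk]
    norm_num
  rw [Finset.sum_congr rfl h1]
  simp

lemma expand_sq (N : ℕ) (d : ℕ → ℂ) (θ : ℝ) :
    (∑ k ∈ Finset.range N, d k * Complex.exp (Complex.I * k * θ)) *
      (starRingEnd ℂ) (∑ k ∈ Finset.range N, d k * Complex.exp (Complex.I * k * θ))
    = ∑ p ∈ Finset.range N ×ˢ Finset.range N,
        (d p.1 * (starRingEnd ℂ) (d p.2)) *
          Complex.exp (Complex.I * ((p.1 : ℂ) - p.2) * θ) := by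
  rw [map_sum, Finset.sum_mul_sum, Finset.sum_product]
  apply Finset.sum_congr rfl
  intro j _
  apply Finset.sum_congr rfl
  intro k _
  rw [map_mul]
  have hc : (starRingEnd ℂ) (Complex.exp (Complex.I * k * θ))
      = Complex.exp (-(Complex.I * k * θ)) := by
    rw [← Complex.exp_conj]
    congr 1
    simp only [map_mul, Complex.conj_I, Complex.conj_natCast, Complex.conj_ofReal]
    ring
  rw [hc]
  rw [show d j * Complex.exp (Complex.I * j * θ) *
        ((starRingEnd ℂ) (d k) * Complex.exp (-(Complex.I * k * θ)))
      = (d j * (starRingEnd ℂ) (d k)) *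
        (Complex.exp (Complex.I * j * θ) * Complex.exp (-(Complex.I * k * θ))) from by ring,
    ← Complex.exp_add]
  congr 1
  ring_nf

/-- a Golay sequence has PMEPR at most 2: for a unimodular GCP `(a,b)`
of length `N`, `|∑_k a_k e^{ikθ}|² ≤ 2N` for every real `θ`. -/
theorem golay_pmepr_le_two (N : ℕ) (a b : ℕ → ℂ)
    (ha : ∀ k < N, ‖a k‖ = 1)
    (hb : ∀ k < N, ‖b k‖ = 1)
    (h : IsGCP N a b) (θ : ℝ) :
    (‖(∑ k ∈ Finset.range N,
        a k * Complex.exp (Complex.I * k * θ))‖) ^ 2 ≤ 2 * N := by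
  set Sa := ∑ k ∈ Finset.range N, a k * Complex.exp (Complex.I * k * θ) with hSa
  set Sb := ∑ k ∈ Finset.range N, b k * Complex.exp (Complex.I * k * θ) with hSb
  have key : Sa * (starRingEnd ℂ) Sa + Sb * (starRingEnd ℂ) Sb = 2 * N := by
    rw [hSa, hSb, expand_sq, expand_sq, ← Finset.sum_add_distrib]
    have hmaps : ∀ p ∈ Finset.range N ×ˢ Finset.range N,
        ((p.2 : ℤ) - p.1) ∈ Finset.Icc (-(N : ℤ)) N := by
      intro p hp
      simp only [Finset.mem_product, Finset.mem_range] at hp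
      simp only [Finset.mem_Icc]
      omega
    rw [← Finset.sum_fiberwise_of_maps_to hmaps]
    have hfib : ∀ s : ℤ,
        (∑ p ∈ (Finset.range N ×ˢ Finset.range N).filter
            (fun p => (p.2 : ℤ) - p.1 = s),
          ((a p.1 * (starRingEnd ℂ) (a p.2)) *
              Complex.exp (Complex.I * ((p.1 : ℂ) - p.2) * θ) +
            (b p.1 * (starRingEnd ℂ) (b p.2)) *
              Complex.exp (Complex.I * ((p.1 : ℂ) - p.2) * θ)))
        = Complex.exp (Complex.I * ((-s : ℤ) : ℂ) * θ) * (aauto N a s + aauto N b s) := by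
      intro s
      rw [aauto_eq_fiber, aauto_eq_fiber, gfib, mul_add, Finset.mul_sum, Finset.mul_sum,
        ← Finset.sum_add_distrib]
      apply Finset.sum_congr rfl
      intro p hp
      have hps : (p.2 : ℤ) - p.1 = s := (Finset.mem_filter.1 hp).2
      have hcast : ((p.1 : ℂ) - p.2) = ((-s : ℤ) : ℂ) := by
        rw [← hps]
        push_cast
        ring
      rw [hcast]
      ring
    rw [Finset.sum_congr rfl (fun s _ => hfib s)]
    rw [Finset.sum_eq_single 0]
    · rw [aauto_zero N a ha, aauto_zero N b hb]
      simp
      ring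
    · intro s _ hs
      rw [h s hs, mul_zero]
    · intro h0
      exact absurd (Finset.mem_Icc.2 ⟨by omega, by omega⟩) h0
  have h2 : (‖Sa‖) ^ 2 + (‖Sb‖) ^ 2 = 2 * N := by
    rw [Complex.mul_conj, Complex.mul_conj] at key
    have hr : Complex.normSq Sa + Complex.normSq Sb = 2 * N := by
      exact_mod_cast key
    rw [← Complex.sq_norm, ← Complex.sq_norm] at hr
    exact hr
  linarith [sq_nonneg (‖Sb‖)]
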